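/- Let τ > 0. For the counting-synapse model (τ → ∞ limit), the functions in the RMF self-consistency equations reduce to l(x) = r x, h(x) = 0, and h_{j}(x) = (e^(μ_j x) − 1)/μ_j − x; i.e., lim_{τ→∞} τ r (e^(x/τ) − 1) = r x, lim_{τ→∞} b(τ(e^(x/τ)−1) − x) = 0, and lim_{τ→∞} [τ e^(−τμ)(Ei(τμ e^(x/τ)) − Ei(τμ)) − x] = (e^(μx) − 1)/μ − x for each fixed x ∈ ℝ and μ > 0. -/

import Mathlib

open Real Filter
open MeasureTheory intervalIntegral

lemma summable_Ei (y : ℝ) :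
    Summable (fun n : ℕ => y ^ (n + 1) / ((n + 1) * (n + 1).factorial)) := by
  have h : Summable (fun n : ℕ => |y| ^ (n + 1) / (n + 1).factorial) :=
    (Real.summable_pow_div_factorial |y|).comp_injective (add_left_injective 1)
  refine Summable.of_norm (h.of_nonneg_of_le (fun n => norm_nonneg _) fun n => ?_)
  rw [norm_div, norm_pow, Real.norm_eq_abs, Real.norm_eq_abs,
    abs_of_pos (by positivity : (0:ℝ) < (n + 1) * ((n+1).factorial:ℝ))]
  gcongr
  exact le_mul_of_one_le_left (by positivity) (by exact_mod_cast Nat.le_add_left 1 n)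

lemma summable_aux2 (t : ℝ) : Summable (fun n : ℕ => t ^ n / (n + 1).factorial) := by
  refine Summable.of_norm ((Real.summable_pow_div_factorial |t|).of_nonneg_of_le
    (fun n => norm_nonneg _) fun n => ?_)
  rw [norm_div, norm_pow, Real.norm_eq_abs, Real.norm_eq_abs,
    abs_of_pos (by positivity : (0:ℝ) < ((n+1).factorial : ℝ))]
  gcongr
  exact_mod_cast Nat.le_succ n

lemma tsum_aux {t : ℝ} (ht : t ≠ 0) :
    ∑' n : ℕ, t ^ n / (n + 1).factorial = (Real.exp t - 1) / t := by
  have hexp : Real.exp t = ∑' n : ℕ, t ^ n / n.factorial := by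
    rw [Real.exp_eq_exp_ℝ, NormedSpace.exp_eq_tsum_div]
  have hsum : Summable (fun n : ℕ => t ^ n / n.factorial) := Real.summable_pow_div_factorial t
  have h0 := Summable.tsum_eq_zero_add hsum
  simp only [pow_zero, Nat.factorial_zero, Nat.cast_one, div_one] at h0
  have h1 : ∑' n : ℕ, t ^ (n + 1) / ((n+1).factorial : ℝ)
      = t * ∑' n : ℕ, t ^ n / (n + 1).factorial := by
    rw [← tsum_mul_left]
    congr 1; ext n; rw [pow_succ]; ring
  rw [hexp, h0, h1]
  field_simp
  ring

/-- The exponential integral function, via its classical series representation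
`Ei(y) = γ + ln|y| + Σ_{n≥1} yⁿ/(n·n!)` (which agrees with the principal-value integral
`Ei(y) = −p.v.∫_{−y}^∞ e^(−t)/t dt`). -/
noncomputable def Ei (y : ℝ) : ℝ :=
  Real.eulerMascheroniConstant + Real.log |y|
    + ∑' n : ℕ, y ^ (n + 1) / ((n + 1) * (n + 1).factorial)

lemma exp_div_intble {a b : ℝ} (ha : 0 < a) (hb : 0 < b) :
    IntervalIntegrable (fun t => Real.exp t / t) volume a b := by
  apply ContinuousOn.intervalIntegrable
  apply Real.continuous_exp.continuousOn.div continuousOn_id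
  intro t ht
  exact ((lt_min ha hb).trans_le ht.1).ne'

lemma Ei_sub_integral {a b : ℝ} (ha : 0 < a) (hb : 0 < b) :
    Ei b - Ei a = ∫ t in a..b, Real.exp t / t := by
  wlog hab : a ≤ b generalizing a b
  · have h := this hb ha (le_of_not_ge hab)
    rw [intervalIntegral.integral_symm] at h
    linarith
  have hEq : ∀ t ∈ Set.uIcc a b, t ≠ 0 := fun t ht => ((lt_min ha hb).trans_le ht.1).ne'
  have hcalc : ∀ n : ℕ, ∫ t in Set.Ioc a b, t ^ n / ((n+1).factorial:ℝ)
      = (b ^ (n+1) - a ^ (n+1)) / ((↑n + 1) * (n+1).factorial) := by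
    intro n
    rw [← intervalIntegral.integral_of_le hab, intervalIntegral.integral_div, integral_pow,
      div_div]
  have key : (∑' n : ℕ, (b ^ (n+1) - a ^ (n+1)) / ((↑n + 1) * ((n+1).factorial:ℝ)))
      = ∫ t in a..b, (Real.exp t - 1)/t := by
    have hint : ∀ n : ℕ, Integrable (fun t : ℝ => t ^ n / ((n+1).factorial:ℝ))
        (volume.restrict (Set.Ioc a b)) :=
      fun n => (Continuous.integrableOn_Ioc (by continuity))
    have hnorm : ∀ n : ℕ, (∫ t in Set.Ioc a b, ‖t ^ n / ((n+1).factorial:ℝ)‖)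
        = (b ^ (n+1) - a ^ (n+1)) / ((↑n + 1) * ((n+1).factorial:ℝ)) := by
      intro n
      rw [← hcalc n]
      apply setIntegral_congr_fun measurableSet_Ioc
      intro t ht
      have ht0 : 0 ≤ t := (ha.trans ht.1).le
      simp only [Real.norm_eq_abs]
      exact abs_of_nonneg (by positivity)
    have hsum : Summable (fun n : ℕ => ∫ t in Set.Ioc a b, ‖t ^ n / ((n+1).factorial:ℝ)‖) := by
      refine Summable.congr (((summable_Ei b).sub (summable_Ei a)).congr fun n => ?_)
        fun n => (hnorm n).symm
      rw [← sub_div]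
    have hswap := MeasureTheory.integral_tsum_of_summable_integral_norm hint hsum
    calc (∑' n : ℕ, (b ^ (n+1) - a ^ (n+1)) / ((↑n + 1) * ((n+1).factorial:ℝ)))
        = ∑' n : ℕ, ∫ t in Set.Ioc a b, t ^ n / ((n+1).factorial:ℝ) := by
          exact (tsum_congr fun n => (hcalc n).symm)
      _ = ∫ t in Set.Ioc a b, ∑' n : ℕ, t ^ n / ((n+1).factorial:ℝ) := hswap
      _ = ∫ t in Set.Ioc a b, (Real.exp t - 1)/t := by
          apply setIntegral_congr_fun measurableSet_Ioc
          intro t ht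
          exact tsum_aux (ha.trans ht.1).ne'
      _ = ∫ t in a..b, (Real.exp t - 1)/t := (intervalIntegral.integral_of_le hab).symm
  have hint2 : IntervalIntegrable (fun t : ℝ => (Real.exp t - 1) / t) volume a b :=
    ContinuousOn.intervalIntegrable (((Real.continuous_exp.continuousOn).sub
      continuousOn_const).div continuousOn_id hEq)
  have hlogint : IntervalIntegrable (fun t : ℝ => 1 / t) volume a b :=
    ContinuousOn.intervalIntegrable (continuousOn_const.div continuousOn_id hEq)
  have hsplit : (∫ t in a..b, Real.exp t / t)
      = (∫ t in a..b, (Real.exp t - 1)/t) + ∫ t in a..b, 1/t := by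
    rw [← intervalIntegral.integral_add hint2 hlogint]
    apply intervalIntegral.integral_congr
    intro t ht
    have h0 : t ≠ 0 := hEq t ht
    field_simp
    ring
  have hlog : (∫ t in a..b, 1/t) = Real.log b - Real.log a := by
    rw [integral_one_div (fun h => (hEq 0 h rfl)), Real.log_div hb.ne' ha.ne']
  have hts : (∑' n : ℕ, (b ^ (n+1) - a ^ (n+1)) / ((↑n + 1) * ((n+1).factorial:ℝ)))
      = (∑' n : ℕ, b ^ (n+1) / ((↑n + 1) * ((n+1).factorial:ℝ)))
        - (∑' n : ℕ, a ^ (n+1) / ((↑n + 1) * ((n+1).factorial:ℝ))) := by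
    rw [← Summable.tsum_sub (summable_Ei b) (summable_Ei a)]
    exact tsum_congr fun n => by rw [sub_div]
  simp only [Ei, abs_of_pos ha, abs_of_pos hb]
  linarith [key, hsplit, hlog, hts]

lemma integral_exp_div_bounds_le {a b : ℝ} (ha : 0 < a) (hab : a ≤ b) :
    (Real.exp b - Real.exp a) / b ≤ (∫ t in a..b, Real.exp t / t) ∧
    (∫ t in a..b, Real.exp t / t) ≤ (Real.exp b - Real.exp a) / a := by
  have hb : 0 < b := ha.trans_le hab
  have hI := exp_div_intble ha hb
  constructor
  · have h : (∫ t in a..b, Real.exp t / b) ≤ ∫ t in a..b, Real.exp t / t := by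
      apply intervalIntegral.integral_mono_on hab ((Real.continuous_exp.div_const b).intervalIntegrable a b) hI
      intro t ht
      have h1 : 0 < t := ha.trans_le ht.1
      gcongr
      exact ht.2
    rwa [intervalIntegral.integral_div, integral_exp] at h
  · have h : (∫ t in a..b, Real.exp t / t) ≤ ∫ t in a..b, Real.exp t / a := by
      apply intervalIntegral.integral_mono_on hab hI ((Real.continuous_exp.div_const a).intervalIntegrable a b)
      intro t ht
      have h1 : 0 < t := ha.trans_le ht.1
      gcongr
      exact ht.1
    rwa [intervalIntegral.integral_div, integral_exp] at h

lemma integral_exp_div_bounds {a b : ℝ} (ha : 0 < a) (hb : 0 < b) :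
    (Real.exp b - Real.exp a) / b ≤ (∫ t in a..b, Real.exp t / t) ∧
    (∫ t in a..b, Real.exp t / t) ≤ (Real.exp b - Real.exp a) / a := by
  rcases le_total a b with hab | hab
  · exact integral_exp_div_bounds_le ha hab
  · obtain ⟨h1, h2⟩ := integral_exp_div_bounds_le hb hab
    rw [intervalIntegral.integral_symm]
    have e1 : (Real.exp b - Real.exp a) / b = -((Real.exp a - Real.exp b) / b) := by ring
    have e2 : (Real.exp b - Real.exp a) / a = -((Real.exp a - Real.exp b) / a) := by ring
    constructor <;> [rw [e1]; rw [e2]] <;> linarith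

lemma tendsto_tau_exp (x : ℝ) :
    Tendsto (fun τ : ℝ => τ * (Real.exp (x / τ) - 1)) atTop (nhds x) := by
  have hd : HasDerivAt (fun h : ℝ => Real.exp (x * h)) x 0 := by
    have := (Real.hasDerivAt_exp (x * 0)).comp 0 ((hasDerivAt_id 0).const_mul x)
    simpa [Function.comp_def] using this
  have hslope := hasDerivAt_iff_tendsto_slope.mp hd
  have hinv : Tendsto (fun τ : ℝ => τ⁻¹) atTop (nhdsWithin 0 {(0:ℝ)}ᶜ) := by
    apply tendsto_nhdsWithin_of_tendsto_nhds_of_eventually_within _ tendsto_inv_atTop_zero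
    filter_upwards [eventually_gt_atTop 0] with τ hτ
    exact (inv_pos.mpr hτ).ne'
  refine Tendsto.congr' ?_ (hslope.comp hinv)
  filter_upwards [eventually_gt_atTop 0] with τ hτ
  simp only [Function.comp_apply, slope_def_field, mul_zero, Real.exp_zero, sub_zero,
    div_eq_mul_inv]
  rw [inv_inv, mul_comm x τ⁻¹, ← div_eq_inv_mul]
  ring

/-- In the `τ → ∞` limit, the RMF self-consistency functions of the relaxing model reduce
to those of the counting-synapse model: `l(x) = r x`, `h(x) = 0`, and
`h_j(x) = (e^(μx) − 1)/μ − x`. -/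
theorem stmt18 (x r b μ : ℝ) (hμ : 0 < μ) :
    Tendsto (fun τ : ℝ => τ * r * (Real.exp (x / τ) - 1)) atTop (nhds (r * x)) ∧
    Tendsto (fun τ : ℝ => b * (τ * (Real.exp (x / τ) - 1) - x)) atTop (nhds 0) ∧
    Tendsto (fun τ : ℝ =>
        τ * Real.exp (-τ * μ) * (Ei (τ * μ * Real.exp (x / τ)) - Ei (τ * μ)) - x)
      atTop (nhds ((Real.exp (μ * x) - 1) / μ - x)) := by
  have hc := tendsto_tau_exp x
  refine ⟨?_, ?_, ?_⟩
  · exact (hc.const_mul r).congr fun τ => by ring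
  · have h0 := (hc.sub_const x).const_mul b
    simpa using h0
  · have hdd : Tendsto (fun τ : ℝ => Real.exp (x / τ)) atTop (nhds 1) := by
      rw [← Real.exp_zero]
      exact (Real.continuous_exp.tendsto 0).comp (tendsto_const_nhds.div_atTop tendsto_id)
    have hnum : Tendsto (fun τ : ℝ => Real.exp (μ * (τ * (Real.exp (x / τ) - 1))) - 1) atTop
        (nhds (Real.exp (μ * x) - 1)) :=
      ((Real.continuous_exp.tendsto _).comp (hc.const_mul μ)).sub_const 1
    have hupper : Tendsto
        (fun τ : ℝ => (Real.exp (μ * (τ * (Real.exp (x / τ) - 1))) - 1) / μ - x)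
        atTop (nhds ((Real.exp (μ * x) - 1) / μ - x)) := (hnum.div_const μ).sub_const x
    have hlower : Tendsto (fun τ : ℝ =>
        (Real.exp (μ * (τ * (Real.exp (x / τ) - 1))) - 1) / (μ * Real.exp (x / τ)) - x)
        atTop (nhds ((Real.exp (μ * x) - 1) / μ - x)) := by
      have := (hnum.div (hdd.const_mul μ) (by simp [hμ.ne'])).sub_const x
      simpa using this
    refine tendsto_of_tendsto_of_tendsto_of_le_of_le' hlower hupper ?_ ?_
    · filter_upwards [eventually_gt_atTop 0] with τ hτ
      have ha : 0 < τ * μ := mul_pos hτ hμ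
      have hB : 0 < τ * μ * Real.exp (x / τ) := mul_pos ha (Real.exp_pos _)
      have hEi := Ei_sub_integral ha hB
      obtain ⟨h1, _⟩ := integral_exp_div_bounds ha hB
      have hpos : (0:ℝ) ≤ τ * Real.exp (-τ * μ) := (mul_pos hτ (Real.exp_pos _)).le
      have hsplit : Real.exp (τ * μ * Real.exp (x / τ))
          = Real.exp (τ * μ) * Real.exp (μ * (τ * (Real.exp (x / τ) - 1))) := by
        rw [← Real.exp_add]; congr 1; ring
      have eq2 : τ * Real.exp (-τ * μ) *
            ((Real.exp (τ * μ * Real.exp (x / τ)) - Real.exp (τ * μ)) / (τ * μ * Real.exp (x / τ)))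
          = (Real.exp (μ * (τ * (Real.exp (x / τ) - 1))) - 1) / (μ * Real.exp (x / τ)) := by
        rw [hsplit, neg_mul, Real.exp_neg]
        field_simp
      have hle := mul_le_mul_of_nonneg_left h1 hpos
      rw [hEi]
      linarith [hle, eq2]
    · filter_upwards [eventually_gt_atTop 0] with τ hτ
      have ha : 0 < τ * μ := mul_pos hτ hμ
      have hB : 0 < τ * μ * Real.exp (x / τ) := mul_pos ha (Real.exp_pos _)
      have hEi := Ei_sub_integral ha hB
      obtain ⟨_, h2⟩ := integral_exp_div_bounds ha hB
      have hpos : (0:ℝ) ≤ τ * Real.exp (-τ * μ) := (mul_pos hτ (Real.exp_pos _)).le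
      have hsplit : Real.exp (τ * μ * Real.exp (x / τ))
          = Real.exp (τ * μ) * Real.exp (μ * (τ * (Real.exp (x / τ) - 1))) := by
        rw [← Real.exp_add]; congr 1; ring
      have eq1 : τ * Real.exp (-τ * μ) *
            ((Real.exp (τ * μ * Real.exp (x / τ)) - Real.exp (τ * μ)) / (τ * μ))
          = (Real.exp (μ * (τ * (Real.exp (x / τ) - 1))) - 1) / μ := by
        rw [hsplit, neg_mul, Real.exp_neg]
        field_simp
      have hle := mul_le_mul_of_nonneg_left h2 hpos
      rw [hEi]
      linarith [hle, eq1]
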